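/- Let e, f ≥ 2 be integers, set g = gcd(e, f), and let k = 1 - (e+f)/g (an integer since g divides e+f, and k ≤ 0). Then F^{k-1}_{-1,-1} = {(f/g, e/g)}, and F^k_{i,j} = ∅ for all integers i, j with 0 ≤ i ≤ e-2 and 0 ≤ j ≤ f-2. -/

import Mathlib

/-- For the Fermat-type polynomial with `g = gcd(e,f)` and `k = 1 - (e+f)/g`,
the set `F^{k-1}_{-1,-1}` equals `{(f/g, e/g)}` and all the sets `F^k_{i,j}`
with `0 ≤ i ≤ e-2`, `0 ≤ j ≤ f-2` are empty. -/
theorem fermat_first_concentrated_degree (e f g k : ℤ) (he : 2 ≤ e) (hf : 2 ≤ f)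
    (hg : g = (Int.gcd e f : ℤ)) (hk : k = 1 - (e + f) / g) :
    {p : ℤ × ℤ | -1 + p.1 * e = -1 + p.2 * f ∧ 0 ≤ -1 + p.1 * e ∧
        p.1 + p.2 = -(k - 1)} = {(f / g, e / g)} ∧
    ∀ i j : ℤ, 0 ≤ i → i ≤ e - 2 → 0 ≤ j → j ≤ f - 2 →
      {p : ℤ × ℤ | i + p.1 * e = j + p.2 * f ∧ 0 ≤ i + p.1 * e ∧
          p.1 + p.2 = -k} = (∅ : Set (ℤ × ℤ)) := by
  have hg0 : 0 < g := by
    rw [hg]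
    exact_mod_cast Int.gcd_pos_of_ne_zero_left f (by omega)
  obtain ⟨a, ha⟩ : g ∣ e := hg ▸ Int.gcd_dvd_left e f
  obtain ⟨b, hb⟩ : g ∣ f := hg ▸ Int.gcd_dvd_right e f
  have ha1 : 1 ≤ a := by nlinarith
  have hb1 : 1 ≤ b := by nlinarith
  have hdiva : e / g = a := by rw [ha, Int.mul_ediv_cancel_left _ hg0.ne']
  have hdivb : f / g = b := by rw [hb, Int.mul_ediv_cancel_left _ hg0.ne']
  have hdivsum : (e + f) / g = a + b := by
    rw [ha, hb, ← mul_add, Int.mul_ediv_cancel_left _ hg0.ne']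
  have hk' : k = 1 - (a + b) := by rw [hk, hdivsum]
  constructor
  · ext p
    simp only [Set.mem_setOf_eq, Set.mem_singleton_iff]
    constructor
    · rintro ⟨h1, h2, h3⟩
      have h3' : p.1 + p.2 = a + b := by rw [h3, hk']; ring
      have hcancel : p.1 * a = p.2 * b := by
        have h1' : g * (p.1 * a) = g * (p.2 * b) := by
          have : p.1 * e = p.2 * f := by linarith
          rw [ha, hb] at this; linarith [this]
        exact mul_left_cancel₀ hg0.ne' h1'
      have hz : (p.1 - b) * (a + b) = 0 := by linear_combination hcancel + b * h3'
      have hp1 : p.1 = b := by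
        rcases mul_eq_zero.1 hz with h | h
        · linarith
        · linarith
      have hp2 : p.2 = a := by linarith
      rw [hdiva, hdivb]
      exact Prod.ext hp1 hp2
    · intro hp
      rw [hp, hdiva, hdivb]
      refine ⟨?_, ?_, ?_⟩
      · simp only; rw [ha, hb]; ring
      · simp only; nlinarith
      · simp only; rw [hk']; ring
  · intro i j hi hie hj hjf
    ext p
    simp only [Set.mem_setOf_eq, Set.mem_empty_iff_false, iff_false, not_and]
    rintro h1 h2 h3
    set m := p.1 with hm
    set n := p.2 with hn
    have h3' : (m - b) + (n - a) = -1 := by rw [hk'] at h3; linarith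
    set t := m - b with ht
    set s := n - a with hs
    set d := i + m * e - g * a * b with hd
    have hd_e : d = i + e * t := by rw [hd, ht]; linear_combination b * ha
    have hd_f : d = j + f * s := by rw [hd, hs]; linear_combination h1 + a * hb
    have hd_eq : d * (e + f) = i * f + j * e - e * f := by
      linear_combination f * hd_e + e * hd_f + e * f * h3'
    rcases le_or_gt t (-1) with hts | hts
    · -- then s ≥ 0, so d ≥ 0, but d = i + e*t ≤ i - e < 0
      have hs0 : 0 ≤ s := by linarith
      nlinarith [mul_nonneg (by linarith : (0:ℤ) ≤ f) hs0,
        mul_le_mul_of_nonneg_left hts (by linarith : (0:ℤ) ≤ e)]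
    · have ht0 : 0 ≤ t := by linarith
      rcases eq_or_lt_of_le ht0 with ht0' | ht1
      · -- t = 0, so d = i and i*(e+f) = i*f + j*e - e*f
        have hdi : d = i := by rw [hd_e, ← ht0']; ring
        rw [hdi] at hd_eq
        nlinarith [mul_pos (by linarith : (0:ℤ) < e) (by linarith : (0:ℤ) < i - j + f)]
      · -- t ≥ 1, so d ≥ e, but d*(e+f) = i*f + j*e - e*f ≤ ef - 2e - 2f
        have ht1' : 1 ≤ t := ht1
        nlinarith [mul_le_mul_of_nonneg_right hie (by linarith : (0:ℤ) ≤ f),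
          mul_le_mul_of_nonneg_right hjf (by linarith : (0:ℤ) ≤ e),
          mul_nonneg hi (by linarith : (0:ℤ) ≤ e + f),
          mul_le_mul_of_nonneg_right ht1' (by positivity : (0:ℤ) ≤ e * (e + f))]
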